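/- Discrete free-energy dissipation of the 1D semi-implicit scheme: suppose φ^{n+1} solves the scheme φ_i^{n+1} = φ_i^n − (Δt/Δx)(F_{i+1/2} − F_{i−1/2}) with upwind fluxes F_{i+1/2} = u⁺_{i+1/2} M(φ_i^{n+1},φ_{i+1}^{n+1}) + u⁻_{i+1/2} M(φ_{i+1}^{n+1},φ_i^{n+1}), velocities u_{i+1/2} = −(ξ_{i+1} − ξ_i)/Δx, semi-implicit chemical potential ξ_i = H_c'(φ_i^{n+1}) − H_e'(φ_i^n) − (ε²/2)[L_i(φ^n) + L_i(φ^{n+1})] (no wetting terms), no-flux boundary fluxes, convex differentiable H_c, H_e, and nonnegative mobility function M. Then the discrete free energy F_Δ^n = Δx Σ_i [H_c(φ_i^n) − H_e(φ_i^n)] + Δx Σ_{i=1}^{N−1} (ε²/2)((φ_{i+1}^n − φ_i^n)/Δx)² satisfies F_Δ^{n+1} − F_Δ^n ≤ −Δt Δx Σ_{i=1}^{N−1} min(M(φ_i^{n+1},φ_{i+1}^{n+1}), M(φ_{i+1}^{n+1},φ_i^{n+1})) |u_{i+1/2}|² ≤ 0. -/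

import Mathlib

private lemma abel_id (f g : ℕ → ℝ) (N : ℕ) (hN : 1 ≤ N) :
    ∑ i ∈ Finset.Icc 1 N, f i * (g i - g (i - 1)) +
      ∑ i ∈ Finset.Ico 1 N, (f (i + 1) - f i) * g i = f N * g N - f 1 * g 0 := by
  induction N, hN using Nat.le_induction with
  | base => simp; ring
  | succ n hn ih =>
    rw [Finset.sum_Icc_succ_top (by omega : 1 ≤ n + 1),
        Finset.sum_Ico_succ_top (by omega : 1 ≤ n)]
    have h : n + 1 - 1 = n := rfl
    rw [h]
    linear_combination ih

private lemma abel_sbp (f g : ℕ → ℝ) (N : ℕ) (hN : 1 ≤ N) (hg0 : g 0 = 0) (hgN : g N = 0) :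
    ∑ i ∈ Finset.Icc 1 N, f i * (g i - g (i - 1)) =
      -∑ i ∈ Finset.Ico 1 N, (f (i + 1) - f i) * g i := by
  have h := abel_id f g N hN
  rw [hg0, hgN] at h
  linarith

private lemma tangent_line (h h' : ℝ → ℝ) (hc : ConvexOn ℝ Set.univ h)
    (hd : ∀ x, HasDerivAt h (h' x) x) (x y : ℝ) :
    h x - h y ≤ h' x * (x - y) := by
  rcases lt_trichotomy x y with hxy | hxy | hxy
  · have h1 := hc.le_slope_of_hasDerivAt (Set.mem_univ x) (Set.mem_univ y) hxy (hd x)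
    rw [slope_def_field, le_div_iff₀ (by linarith)] at h1
    nlinarith
  · subst hxy; simp
  · have h1 := hc.slope_le_of_hasDerivAt (Set.mem_univ y) (Set.mem_univ x) hxy (hd x)
    rw [slope_def_field, div_le_iff₀ (by linarith)] at h1
    nlinarith

theorem discrete_free_energy_dissipation_1D (N : ℕ) (hN : 2 ≤ N)
    (Δt Δx ε : ℝ) (hΔt : 0 < Δt) (hΔx : 0 < Δx) (hε : 0 < ε)
    (φn φn1 ξ u F : ℕ → ℝ)
    (Hc He : ℝ → ℝ) (Hc' He' : ℝ → ℝ)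
    (hHcconv : ConvexOn ℝ Set.univ Hc) (hHeconv : ConvexOn ℝ Set.univ He)
    (hHc' : ∀ x, HasDerivAt Hc (Hc' x) x) (hHe' : ∀ x, HasDerivAt He (He' x) x)
    (M : ℝ → ℝ → ℝ) (hM : ∀ x y, 0 ≤ M x y)
    (L : (ℕ → ℝ) → ℕ → ℝ)
    (hL1 : ∀ χ : ℕ → ℝ, L χ 1 = (χ 2 - χ 1) / Δx ^ 2)
    (hLN : ∀ χ : ℕ → ℝ, L χ N = (χ (N - 1) - χ N) / Δx ^ 2)
    (hLi : ∀ χ : ℕ → ℝ, ∀ i, 2 ≤ i → i ≤ N - 1 →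
      L χ i = (χ (i + 1) - 2 * χ i + χ (i - 1)) / Δx ^ 2)
    (hξ : ∀ i ∈ Finset.Icc 1 N,
      ξ i = Hc' (φn1 i) - He' (φn i) - ε ^ 2 / 2 * (L φn i + L φn1 i))
    (hu : ∀ i ∈ Finset.Ico 1 N, u i = -(ξ (i + 1) - ξ i) / Δx)
    (hF : ∀ i ∈ Finset.Ico 1 N,
      F i = max (u i) 0 * M (φn1 i) (φn1 (i + 1)) +
            min (u i) 0 * M (φn1 (i + 1)) (φn1 i))
    (hF0 : F 0 = 0) (hFN : F N = 0)
    (hscheme : ∀ i ∈ Finset.Icc 1 N,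
      φn1 i = φn i - Δt / Δx * (F i - F (i - 1))) :
    (Δx * ∑ i ∈ Finset.Icc 1 N, (Hc (φn1 i) - He (φn1 i)) +
        Δx * ∑ i ∈ Finset.Ico 1 N, ε ^ 2 / 2 * ((φn1 (i + 1) - φn1 i) / Δx) ^ 2) -
      (Δx * ∑ i ∈ Finset.Icc 1 N, (Hc (φn i) - He (φn i)) +
        Δx * ∑ i ∈ Finset.Ico 1 N, ε ^ 2 / 2 * ((φn (i + 1) - φn i) / Δx) ^ 2) ≤
      -(Δt * Δx) * ∑ i ∈ Finset.Ico 1 N,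
        min (M (φn1 i) (φn1 (i + 1))) (M (φn1 (i + 1)) (φn1 i)) * (u i) ^ 2 ∧
    -(Δt * Δx) * ∑ i ∈ Finset.Ico 1 N,
        min (M (φn1 i) (φn1 (i + 1))) (M (φn1 (i + 1)) (φn1 i)) * (u i) ^ 2 ≤ 0 := by
  have hΔx' : Δx ≠ 0 := ne_of_gt hΔx
  -- the auxiliary boundary-zero gradient function
  set g : ℕ → ℝ := fun i => if i = 0 ∨ N ≤ i then 0 else
      ε ^ 2 / 2 / Δx ^ 2 * ((φn (i + 1) + φn1 (i + 1)) - (φn i + φn1 i)) with hgdef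
  have hg0 : g 0 = 0 := by simp [hgdef]
  have hgN : g N = 0 := by simp [hgdef]
  have hgval : ∀ i, 1 ≤ i → i < N →
      g i = ε ^ 2 / 2 / Δx ^ 2 * ((φn (i + 1) + φn1 (i + 1)) - (φn i + φn1 i)) := by
    intro i h1 h2
    simp only [hgdef]
    rw [if_neg (by omega)]
  -- the Laplacian term is a discrete divergence of g
  have key : ∀ i ∈ Finset.Icc 1 N,
      ε ^ 2 / 2 * (L φn i + L φn1 i) = g i - g (i - 1) := by
    intro i hi
    rw [Finset.mem_Icc] at hi
    obtain ⟨hi1, hi2⟩ := hi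
    by_cases hiN : i = N
    · have hs : N - 1 + 1 = N := by omega
      rw [hiN, hgN, hgval (N - 1) (by omega) (by omega), hs, hLN φn, hLN φn1]
      field_simp
      ring
    · by_cases hi1' : i = 1
      · subst hi1'
        have h0 : (1 : ℕ) - 1 = 0 := rfl
        rw [h0, hg0, hgval 1 le_rfl (by omega), hL1 φn, hL1 φn1]
        field_simp
        ring
      · have hs : i - 1 + 1 = i := by omega
        rw [hgval i hi1 (by omega), hgval (i - 1) (by omega) (by omega), hs,
          hLi φn i (by omega) (by omega), hLi φn1 i (by omega) (by omega)]
        field_simp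
        ring
  -- termwise identity for the gradient energy difference
  have hgradterm : ∀ i ∈ Finset.Ico 1 N,
      ε ^ 2 / 2 * ((φn1 (i + 1) - φn1 i) / Δx) ^ 2 -
        ε ^ 2 / 2 * ((φn (i + 1) - φn i) / Δx) ^ 2 =
      ((φn1 (i + 1) - φn (i + 1)) - (φn1 i - φn i)) * g i := by
    intro i hi
    rw [Finset.mem_Ico] at hi
    rw [hgval i hi.1 hi.2]
    field_simp
    ring
  -- Abel for the gradient part
  have hg_abel := abel_sbp (fun i => φn1 i - φn i) g N (by omega) hg0 hgN
  have e1 : ∑ i ∈ Finset.Icc 1 N, (φn1 i - φn i) * (ε ^ 2 / 2 * (L φn i + L φn1 i)) =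
      ∑ i ∈ Finset.Icc 1 N, (φn1 i - φn i) * (g i - g (i - 1)) :=
    Finset.sum_congr rfl fun i hi => by rw [key i hi]
  have e2 : ∑ i ∈ Finset.Ico 1 N,
        (ε ^ 2 / 2 * ((φn1 (i + 1) - φn1 i) / Δx) ^ 2 -
          ε ^ 2 / 2 * ((φn (i + 1) - φn i) / Δx) ^ 2) =
      ∑ i ∈ Finset.Ico 1 N, ((φn1 (i + 1) - φn (i + 1)) - (φn1 i - φn i)) * g i :=
    Finset.sum_congr rfl hgradterm
  have e4 : (∑ i ∈ Finset.Ico 1 N, ε ^ 2 / 2 * ((φn1 (i + 1) - φn1 i) / Δx) ^ 2) -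
      (∑ i ∈ Finset.Ico 1 N, ε ^ 2 / 2 * ((φn (i + 1) - φn i) / Δx) ^ 2) =
      -∑ i ∈ Finset.Icc 1 N, (φn1 i - φn i) * (ε ^ 2 / 2 * (L φn i + L φn1 i)) := by
    rw [← Finset.sum_sub_distrib, e2]
    linarith [hg_abel, e1]
  -- convexity part
  have hA : (∑ i ∈ Finset.Icc 1 N, (Hc (φn1 i) - He (φn1 i))) -
      (∑ i ∈ Finset.Icc 1 N, (Hc (φn i) - He (φn i))) ≤
      ∑ i ∈ Finset.Icc 1 N, (Hc' (φn1 i) - He' (φn i)) * (φn1 i - φn i) := by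
    rw [← Finset.sum_sub_distrib]
    apply Finset.sum_le_sum
    intro i _
    have t1 := tangent_line Hc Hc' hHcconv hHc' (φn1 i) (φn i)
    have t2 := tangent_line He He' hHeconv hHe' (φn i) (φn1 i)
    nlinarith
  -- termwise flux bound
  have hE : ∀ i ∈ Finset.Ico 1 N,
      min (M (φn1 i) (φn1 (i + 1))) (M (φn1 (i + 1)) (φn1 i)) * u i ^ 2 ≤ u i * F i := by
    intro i hi
    rw [hF i hi]
    rcases le_total (u i) 0 with h | h
    · rw [max_eq_right h, min_eq_left h]
      nlinarith [min_le_right (M (φn1 i) (φn1 (i + 1))) (M (φn1 (i + 1)) (φn1 i)),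
        sq_nonneg (u i)]
    · rw [max_eq_left h, min_eq_right h]
      nlinarith [min_le_left (M (φn1 i) (φn1 (i + 1))) (M (φn1 (i + 1)) (φn1 i)),
        sq_nonneg (u i)]
  constructor
  · calc (Δx * ∑ i ∈ Finset.Icc 1 N, (Hc (φn1 i) - He (φn1 i)) +
        Δx * ∑ i ∈ Finset.Ico 1 N, ε ^ 2 / 2 * ((φn1 (i + 1) - φn1 i) / Δx) ^ 2) -
      (Δx * ∑ i ∈ Finset.Icc 1 N, (Hc (φn i) - He (φn i)) +
        Δx * ∑ i ∈ Finset.Ico 1 N, ε ^ 2 / 2 * ((φn (i + 1) - φn i) / Δx) ^ 2)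
        = Δx * ((∑ i ∈ Finset.Icc 1 N, (Hc (φn1 i) - He (φn1 i))) -
            (∑ i ∈ Finset.Icc 1 N, (Hc (φn i) - He (φn i)))) +
          Δx * ((∑ i ∈ Finset.Ico 1 N, ε ^ 2 / 2 * ((φn1 (i + 1) - φn1 i) / Δx) ^ 2) -
            (∑ i ∈ Finset.Ico 1 N, ε ^ 2 / 2 * ((φn (i + 1) - φn i) / Δx) ^ 2)) := by ring
      _ ≤ Δx * (∑ i ∈ Finset.Icc 1 N, (Hc' (φn1 i) - He' (φn i)) * (φn1 i - φn i)) +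
          Δx * ((∑ i ∈ Finset.Ico 1 N, ε ^ 2 / 2 * ((φn1 (i + 1) - φn1 i) / Δx) ^ 2) -
            (∑ i ∈ Finset.Ico 1 N, ε ^ 2 / 2 * ((φn (i + 1) - φn i) / Δx) ^ 2)) := by
        have := mul_le_mul_of_nonneg_left hA hΔx.le
        linarith
      _ = Δx * ∑ i ∈ Finset.Icc 1 N,
            ((Hc' (φn1 i) - He' (φn i)) * (φn1 i - φn i) -
              (φn1 i - φn i) * (ε ^ 2 / 2 * (L φn i + L φn1 i))) := by
        rw [e4, Finset.sum_sub_distrib]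
        ring
      _ = Δx * ∑ i ∈ Finset.Icc 1 N, ξ i * (φn1 i - φn i) := by
        congr 1
        apply Finset.sum_congr rfl
        intro i hi
        rw [hξ i hi]
        ring
      _ = -Δt * ∑ i ∈ Finset.Icc 1 N, ξ i * (F i - F (i - 1)) := by
        rw [Finset.mul_sum, Finset.mul_sum]
        apply Finset.sum_congr rfl
        intro i hi
        have hs := hscheme i hi
        have h2 : φn1 i - φn i = -(Δt / Δx) * (F i - F (i - 1)) := by
          rw [hs]; ring
        rw [h2]
        field_simp
      _ = Δt * ∑ i ∈ Finset.Ico 1 N, (ξ (i + 1) - ξ i) * F i := by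
        rw [abel_sbp ξ F N (by omega) hF0 hFN]
        ring
      _ = -(Δt * Δx) * ∑ i ∈ Finset.Ico 1 N, u i * F i := by
        rw [Finset.mul_sum, Finset.mul_sum]
        apply Finset.sum_congr rfl
        intro i hi
        have h2 : ξ (i + 1) - ξ i = -(Δx * u i) := by
          rw [hu i hi]; field_simp
        rw [h2]
        ring
      _ ≤ -(Δt * Δx) * ∑ i ∈ Finset.Ico 1 N,
            min (M (φn1 i) (φn1 (i + 1))) (M (φn1 (i + 1)) (φn1 i)) * u i ^ 2 := by
        have hsum := Finset.sum_le_sum hE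
        have hpos : 0 < Δt * Δx := mul_pos hΔt hΔx
        nlinarith [mul_le_mul_of_nonneg_left hsum hpos.le]
  · have hS : 0 ≤ ∑ i ∈ Finset.Ico 1 N,
        min (M (φn1 i) (φn1 (i + 1))) (M (φn1 (i + 1)) (φn1 i)) * u i ^ 2 := by
      apply Finset.sum_nonneg
      intro i _
      exact mul_nonneg (le_min (hM _ _) (hM _ _)) (sq_nonneg _)
    have hpos : 0 < Δt * Δx := mul_pos hΔt hΔx
    nlinarith
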